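/- The four points P, P', T_P(P'), and T_{P'}(P) are collinear. -/

import Mathlib

noncomputable section

abbrev Pt := EuclideanSpace ℝ (Fin 2)

lemma affcomb (f : Pt →ᵃ[ℝ] Pt) (a b c : ℝ) (h : a + b + c = 1) (A B C : Pt) :
    f (a • A + b • B + c • C) = a • f A + b • f B + c • f C := by
  have key : ∀ X Y : Pt, f.linear (X - Y) = f X - f Y := by
    intro X Y
    have h2 := f.map_vadd Y (X - Y)
    simp only [vadd_eq_add, sub_add_cancel] at h2
    rw [h2]; abel
  have ha : a = 1 - b - c := by linarith
  subst ha
  have e1 : (1 - b - c) • A + b • B + c • C = (b • (B - A) + c • (C - A)) +ᵥ A := by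
    simp only [vadd_eq_add]; module
  rw [e1, f.map_vadd, map_add, map_smul, map_smul, key, key, vadd_eq_add]
  module

set_option maxHeartbeats 2000000
theorem stmt3
    (A B C : Pt) (hABC : AffineIndependent ℝ ![A, B, C])
    (α β γ : ℝ) (hsum : α + β + γ = 1)
    (hα : α ≠ 0) (hβ : β ≠ 0) (hγ : γ ≠ 0)
    (hβγ : β + γ ≠ 0) (hγα : γ + α ≠ 0) (hαβ : α + β ≠ 0)
    (hs : α * β + β * γ + γ * α ≠ 0)
    (P : Pt) (hP : P = α • A + β • B + γ • C)
    (P' : Pt)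
    (hP'' : P' = (α * β + β * γ + γ * α)⁻¹ • ((β * γ) • A + (γ * α) • B + (α * β) • C))
    (D E F : Pt)
    (hD : D = (β + γ)⁻¹ • (β • B + γ • C))
    (hE : E = (γ + α)⁻¹ • (α • A + γ • C))
    (hF : F = (α + β)⁻¹ • (α • A + β • B))
    (D₃ E₃ F₃ : Pt)
    (hD₃ : D₃ = (β + γ)⁻¹ • (γ • B + β • C))
    (hE₃ : E₃ = (γ + α)⁻¹ • (γ • A + α • C))
    (hF₃ : F₃ = (α + β)⁻¹ • (β • A + α • B))
    (TP : Pt →ᵃ[ℝ] Pt) (hTPA : TP A = D) (hTPB : TP B = E) (hTPC : TP C = F)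
    (TP' : Pt →ᵃ[ℝ] Pt) (hTP'A : TP' A = D₃) (hTP'B : TP' B = E₃) (hTP'C : TP' C = F₃)
    :
    Collinear ℝ ({P, P', TP P', TP' P} : Set Pt) := by
  have hPmem : P ∈ ({P, P', TP P', TP' P} : Set Pt) := by left; rfl
  rw [collinear_iff_of_mem hPmem]
  have hP'c : P' = (β * γ / (α * β + β * γ + γ * α)) • A
      + (γ * α / (α * β + β * γ + γ * α)) • B
      + (α * β / (α * β + β * γ + γ * α)) • C := by
    rw [hP'', smul_add, smul_add, smul_smul, smul_smul, smul_smul,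
      div_eq_inv_mul, div_eq_inv_mul, div_eq_inv_mul]
  have hP'sum : (β * γ / (α * β + β * γ + γ * α))
      + (γ * α / (α * β + β * γ + γ * α))
      + (α * β / (α * β + β * γ + γ * α)) = 1 := by
    rw [← add_div, ← add_div, div_eq_one_iff_eq hs]
    ring
  have hTPP' : TP P' = (β * γ / (α * β + β * γ + γ * α)) • D
      + (γ * α / (α * β + β * γ + γ * α)) • E
      + (α * β / (α * β + β * γ + γ * α)) • F := by
    rw [hP'c, affcomb TP _ _ _ hP'sum, hTPA, hTPB, hTPC]
  have hTP'P : TP' P = α • D₃ + β • E₃ + γ • F₃ := by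
    rw [hP, affcomb TP' _ _ _ hsum, hTP'A, hTP'B, hTP'C]
  refine ⟨P' - P, ?_⟩
  rintro x (rfl | rfl | rfl | rfl)
  · exact ⟨0, by simp⟩
  · exact ⟨1, by simp [vadd_eq_add]⟩
  · refine ⟨-(α * β * γ) / ((α + β) * (β + γ) * (γ + α)), ?_⟩
    rw [hTPP', hD, hE, hF, hP'c, hP, vadd_eq_add]
    have hc : γ = 1 - α - β := by linarith
    subst hc
    have h1 : (1:ℝ) - α ≠ 0 := by intro h; apply hβγ; linarith
    have h2 : (1:ℝ) - β ≠ 0 := by intro h; apply hγα; linarith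
    have e1 : β + (1 - α - β) = 1 - α := by ring
    have e2 : (1 - α - β) + α = 1 - β := by ring
    simp only [e1, e2]
    have hs' : β * (α + (1 - α - β)) + α * (1 - α - β) ≠ 0 := by intro h; apply hs; linarith
    match_scalars <;>
    · field_simp [h1, h2, hs']
      ring
  · refine ⟨(α * β + β * γ + γ * α) / ((α + β) * (β + γ) * (γ + α)), ?_⟩
    rw [hTP'P, hD₃, hE₃, hF₃, hP'c, hP, vadd_eq_add]
    have hc : γ = 1 - α - β := by linarith
    subst hc
    have h1 : (1:ℝ) - α ≠ 0 := by intro h; apply hβγ; linarith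
    have h2 : (1:ℝ) - β ≠ 0 := by intro h; apply hγα; linarith
    have e1 : β + (1 - α - β) = 1 - α := by ring
    have e2 : (1 - α - β) + α = 1 - β := by ring
    simp only [e1, e2]
    have hs' : β * (α + (1 - α - β)) + α * (1 - α - β) ≠ 0 := by intro h; apply hs; linarith
    match_scalars <;>
    · field_simp [h1, h2, hs']
      ring
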